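/- Let d ≥ 2 be even and let m ≥ 0 be a real number. Let e_0, …, e_d be the standard basis of ℝ^{d+1}, with indices taken modulo d+1, let a^{(i)} = e_{i+1} − e_{i−1} for i = 0, …, d, let Δ = conv(e_0, …, e_d), let A = conv(a^{(0)}, …, a^{(d)}), and for each i let A^{(i)} = conv({0} ∪ {a^{(j)} : j ≠ i}). Then every lattice point p ∈ ℤ^{d+1} ∩ (Δ + m·A) lies in e_{i−1} + m·A^{(i)} for some i ∈ {0, …, d} (indices modulo d+1), where Δ + m·A denotes the Minkowski sum. -/

import Mathlib

open Pointwise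

/-- The standard basis vector `e_i` of `ℝ^{d+1}`. -/
def eb (d : ℕ) (i : Fin (d+1)) : Fin (d+1) → ℝ := fun j => if j = i then 1 else 0

/-- The vector `a^{(i)} = e_{i+1} - e_{i-1}` (indices modulo `d+1`). -/
def av (d : ℕ) (i : Fin (d+1)) : Fin (d+1) → ℝ := eb d (i + 1) - eb d (i - 1)

open Fin.NatCast Fin.CommRing

section Aux
variable {d : ℕ}

lemma finCast_eq_iff (a b : ℕ) :
    ((a : Fin (d+1)) = (b : Fin (d+1))) ↔ a ≡ b [MOD d+1] := by
  rw [Fin.ext_iff, Fin.val_natCast, Fin.val_natCast]; rfl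

lemma cancel_two (hodd : Odd (d+1)) {a b : ℕ} (h : 2*a ≡ 2*b [MOD d+1]) :
    a ≡ b [MOD d+1] :=
  Nat.ModEq.cancel_left_of_coprime (Nat.coprime_two_left.mpr hodd).symm h

lemma odd_cast_iff (hodd : Odd (d+1)) (a b : ℕ) :
    (((2*a+1 : ℕ) : Fin (d+1)) = ((2*b+1 : ℕ) : Fin (d+1))) ↔ a ≡ b [MOD d+1] := by
  rw [finCast_eq_iff]
  exact ⟨fun h => cancel_two hodd (Nat.ModEq.add_right_cancel' 1 h),
    fun h => Nat.ModEq.add_right 1 (Nat.ModEq.mul_left 2 h)⟩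

lemma even_cast_iff (hodd : Odd (d+1)) (a b : ℕ) :
    (((2*a : ℕ) : Fin (d+1)) = ((2*b : ℕ) : Fin (d+1))) ↔ a ≡ b [MOD d+1] := by
  rw [finCast_eq_iff]
  exact ⟨fun h => cancel_two hodd h, fun h => Nat.ModEq.mul_left 2 h⟩

lemma odd_even_cast_iff (hodd : Odd (d+1)) (a b : ℕ) :
    (((2*a+1 : ℕ) : Fin (d+1)) = ((2*b+d : ℕ) : Fin (d+1))) ↔ (a+1) ≡ b [MOD d+1] := by
  rw [finCast_eq_iff]
  have key : 2*b+d+1 ≡ 2*b [MOD d+1] := by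
    have h' : 2*b+d+1 = 2*b+(d+1) := by ring
    rw [h']
    exact Nat.add_mod_right (2*b) (d+1)
  constructor
  · intro h
    have h1 : 2*(a+1) ≡ 2*b [MOD d+1] := by
      calc 2*(a+1) = 2*a+1+1 := by ring
        _ ≡ 2*b+d+1 [MOD d+1] := Nat.ModEq.add_right 1 h
        _ ≡ 2*b [MOD d+1] := key
    exact cancel_two hodd h1
  · intro h
    have h1 : 2*a+1+1 ≡ 2*b+d+1 [MOD d+1] := by
      calc 2*a+1+1 = 2*(a+1) := by ring
        _ ≡ 2*b [MOD d+1] := Nat.ModEq.mul_left 2 h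
        _ ≡ 2*b+d+1 [MOD d+1] := key.symm
    exact Nat.ModEq.add_right_cancel' 1 h1

lemma modeq_eq_of_lt {a b n : ℕ} (h : a ≡ b [MOD n]) (ha : a < n) (hb : b < n) : a = b := by
  have h2 := h
  unfold Nat.ModEq at h2
  rwa [Nat.mod_eq_of_lt ha, Nat.mod_eq_of_lt hb] at h2

lemma exists_rep (hde : Even d) (i j : Fin (d+1)) :
    ∃ t, t < d+1 ∧ j = i + ((2*t : ℕ) : Fin (d+1)) := by
  obtain ⟨h, hh⟩ := hde
  set v := (j - i).val with hv
  refine ⟨(v * (h+1)) % (d+1), Nat.mod_lt _ (Nat.succ_pos d), ?_⟩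
  have hmod : 2 * ((v * (h+1)) % (d+1)) ≡ v [MOD d+1] := by
    calc 2 * ((v * (h+1)) % (d+1)) ≡ 2 * (v * (h+1)) [MOD d+1] :=
          Nat.ModEq.mul_left 2 (Nat.mod_modEq _ _)
      _ = v + v * (d+1) := by rw [hh]; ring
      _ ≡ v [MOD d+1] := by
          show (v + v*(d+1)) % (d+1) = v % (d+1)
          exact Nat.add_mul_mod_self_right v v (d+1)
  have hcast : ((2 * ((v * (h+1)) % (d+1)) : ℕ) : Fin (d+1)) = j - i := by
    have h3 : ((v : ℕ) : Fin (d+1)) = j - i := Fin.cast_val_eq_self _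
    rw [← h3]
    exact (by rw [Fin.ext_iff, Fin.val_natCast, Fin.val_natCast]; exact hmod)
  rw [hcast]
  abel

lemma sum_window (hodd : Odd (d+1)) (P : Fin (d+1) → ℤ) (x : Fin (d+1)) :
    ∑ r ∈ Finset.range (d+1), P (x + ((2*r+1 : ℕ) : Fin (d+1))) = ∑ j, P j := by
  rw [← Fin.sum_univ_eq_sum_range (fun r => P (x + ((2*r+1 : ℕ) : Fin (d+1)))) (d+1)]
  refine Fintype.sum_bijective (fun r : Fin (d+1) => x + ((2*(r:ℕ)+1 : ℕ) : Fin (d+1)))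
    ?_ _ _ (fun r => rfl)
  rw [Finite.injective_iff_bijective.symm]
  intro r1 r2 hr
  have h1 : ((2*(r1:ℕ)+1 : ℕ) : Fin (d+1)) = ((2*(r2:ℕ)+1 : ℕ) : Fin (d+1)) :=
    add_left_cancel hr
  have h2 : (r1 : ℕ) ≡ (r2 : ℕ) [MOD d+1] := (odd_cast_iff hodd _ _).mp h1
  exact Fin.ext (modeq_eq_of_lt h2 r1.isLt r2.isLt)

lemma tri_sum (f : ℕ → ℤ) (N : ℕ) :
    ∑ s ∈ Finset.range (N+1), ∑ r ∈ Finset.range s, f r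
      = ∑ r ∈ Finset.range N, ((N - r : ℕ) : ℤ) * f r := by
  induction N with
  | zero => simp
  | succ N ih =>
    rw [Finset.sum_range_succ, ih]
    have step1 : ∑ r ∈ Finset.range N, ((N - r : ℕ) : ℤ) * f r
        = ∑ r ∈ Finset.range (N+1), ((N - r : ℕ) : ℤ) * f r := by
      rw [Finset.sum_range_succ]; simp
    rw [step1, ← Finset.sum_add_distrib]
    refine Finset.sum_congr rfl fun r hr => ?_
    have hrN : r ≤ N := Nat.lt_succ_iff.mp (Finset.mem_range.mp hr)
    have h4 : (N + 1 - r : ℕ) = (N - r) + 1 := by omega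
    rw [h4]
    push_cast
    ring

lemma sum_mul_ind (f : ℕ → ℝ) (s : Finset ℕ) (t : ℕ) :
    ∑ r ∈ s, f r * (if r = t then 1 else 0) = if t ∈ s then f t else 0 := by
  simp [mul_ite]

lemma lin_comb (c : ℕ → ℝ) (g : ℕ → Fin (d+1)) (s : Finset ℕ) :
    IsLinearMap ℝ (fun x : Fin (d+1) → ℝ => ∑ r ∈ s, c r * x (g r)) := by
  constructor
  · intro x y; simp [mul_add, Finset.sum_add_distrib]
  · intro a x
    simp only [Pi.smul_apply, smul_eq_mul, Finset.mul_sum]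
    exact Finset.sum_congr rfl fun r _ => by ring

lemma lin_sum : IsLinearMap ℝ (fun x : Fin (d+1) → ℝ => ∑ j, x j) := by
  constructor
  · intro x y; simp [Finset.sum_add_distrib]
  · intro a x; simp [Finset.mul_sum]

lemma hull_ge {S : Set (Fin (d+1) → ℝ)} {f : (Fin (d+1) → ℝ) → ℝ} (hf : IsLinearMap ℝ f)
    {b : ℝ} (hS : ∀ x ∈ S, b ≤ f x) {x} (hx : x ∈ convexHull ℝ S) : b ≤ f x :=
  convexHull_min hS (convex_halfSpace_ge hf b) hx

lemma hull_eq {S : Set (Fin (d+1) → ℝ)} {f : (Fin (d+1) → ℝ) → ℝ} (hf : IsLinearMap ℝ f)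
    {b : ℝ} (hS : ∀ x ∈ S, f x = b) {x} (hx : x ∈ convexHull ℝ S) : f x = b :=
  convexHull_min hS (convex_hyperplane hf b) hx

/-- Partial sums of `P` along the step-2 cycle starting after `i`. -/
def Qp (d : ℕ) (P : Fin (d+1) → ℤ) (i : Fin (d+1)) (s : ℕ) : ℤ :=
  ∑ r ∈ Finset.range s, P (i + ((2*r+1 : ℕ) : Fin (d+1)))

/-- Global prefix sums. -/
def Tp (d : ℕ) (P : Fin (d+1) → ℤ) (s : ℕ) : ℤ :=
  ∑ k ∈ Finset.range s, P (((2*k+1 : ℕ) : Fin (d+1)))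

lemma Qp_zero (P : Fin (d+1) → ℤ) (i : Fin (d+1)) : Qp d P i 0 = 0 := by
  simp [Qp]

lemma Qp_succ (P : Fin (d+1) → ℤ) (i : Fin (d+1)) (s : ℕ) :
    Qp d P i (s+1) = Qp d P i s + P (i + ((2*s+1 : ℕ) : Fin (d+1))) := by
  simp [Qp, Finset.sum_range_succ]

lemma Qp_top (hodd : Odd (d+1)) (P : Fin (d+1) → ℤ) (i : Fin (d+1)) :
    Qp d P i (d+1) = ∑ j, P j := sum_window hodd P i

lemma Qp_eq_T (P : Fin (d+1) → ℤ) (s0 s : ℕ) :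
    Qp d P ((2*s0 : ℕ) : Fin (d+1)) s = Tp d P (s0 + s) - Tp d P s0 := by
  unfold Qp Tp
  rw [Finset.sum_range_add]
  have h : ∀ r ∈ Finset.range s, P (((2*(s0+r)+1 : ℕ) : Fin (d+1)))
      = P (((2*s0 : ℕ) : Fin (d+1)) + ((2*r+1 : ℕ) : Fin (d+1))) := by
    intro r _
    congr 1
    push_cast
    ring
  rw [Finset.sum_congr rfl h]
  ring

lemma Tp_add (hodd : Odd (d+1)) (P : Fin (d+1) → ℤ) (hsum : ∑ j, P j = 1) (s : ℕ) :
    Tp d P (s + (d+1)) = Tp d P s + 1 := by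
  unfold Tp
  rw [Finset.sum_range_add]
  congr 1
  have h : ∀ r ∈ Finset.range (d+1), P (((2*(s+r)+1 : ℕ) : Fin (d+1)))
      = P (((2*s : ℕ) : Fin (d+1)) + ((2*r+1 : ℕ) : Fin (d+1))) := by
    intro r _
    congr 1
    push_cast
    ring
  rw [Finset.sum_congr rfl h, sum_window hodd P _, hsum]

end Aux

theorem stmt14 (d : ℕ) (hd : 2 ≤ d) (hde : Even d) (m : ℝ) (hm : 0 ≤ m) :
    ∀ p : Fin (d+1) → ℝ, (∀ j, ∃ z : ℤ, p j = (z : ℝ)) →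
      p ∈ convexHull ℝ (Set.range (eb d)) + m • convexHull ℝ (Set.range (av d)) →
      ∃ i : Fin (d+1),
        p ∈ ({eb d (i - 1)} : Set (Fin (d+1) → ℝ))
              + m • convexHull ℝ ({0} ∪ av d '' {j | j ≠ i}) := by
  intro p hint hmem
  have hodd : Odd (d+1) := Even.add_one hde
  choose P hP using hint
  rw [Set.mem_add] at hmem
  obtain ⟨q, hq, z, hz, hqz⟩ := hmem
  rw [Set.mem_smul_set] at hz
  obtain ⟨r0, hr0, rfl⟩ := hz
  have hpk : ∀ k, p k = q k + m * r0 k := by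
    intro k; rw [← hqz]; simp
  -- sums of coordinates
  have hsq : (∑ j, q j) = 1 := by
    refine hull_eq lin_sum ?_ hq
    rintro x ⟨j, rfl⟩
    simp [eb, Finset.sum_ite_eq']
  have hsr : (∑ j, r0 j) = 0 := by
    refine hull_eq lin_sum ?_ hr0
    rintro x ⟨j, rfl⟩
    simp [av, eb, Finset.sum_sub_distrib, Finset.sum_ite_eq']
  have hsP : (∑ j, P j) = 1 := by
    have h1 : (∑ j, p j) = 1 := by
      have : ∀ j ∈ Finset.univ (α := Fin (d+1)), p j = q j + m * r0 j := fun j _ => hpk j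
      rw [Finset.sum_congr rfl this, Finset.sum_add_distrib, ← Finset.mul_sum, hsq, hsr]
      ring
    have h2 : ((∑ j, P j : ℤ) : ℝ) = 1 := by
      push_cast
      rw [← h1]
      exact Finset.sum_congr rfl fun j _ => (hP j).symm
    exact_mod_cast h2
  -- cycle lemma: choose starting point
  have hex : ∃ s, s < d+1 ∧ ∀ k < d+1, Tp d P k ≤ Tp d P s := by
    obtain ⟨x, hx, hmax⟩ := Finset.exists_max_image (Finset.range (d+1)) (Tp d P) ⟨0, by simp⟩
    exact ⟨x, Finset.mem_range.mp hx, fun k hk => hmax k (Finset.mem_range.mpr hk)⟩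
  set s0 := Nat.find hex with hs0def
  obtain ⟨hs0lt, hs0max⟩ : s0 < d+1 ∧ ∀ k < d+1, Tp d P k ≤ Tp d P s0 := Nat.find_spec hex
  have hs0min : ∀ s < s0, Tp d P s ≤ Tp d P s0 - 1 := by
    intro s hs
    have h1 := Nat.find_min hex hs
    have hsn : s < d+1 := lt_trans hs hs0lt
    push_neg at h1
    obtain ⟨k, hk, hTk⟩ := h1 hsn
    have h2 := hs0max k hk
    omega
  set i : Fin (d+1) := ((2*s0 : ℕ) : Fin (d+1)) with hidef
  have hQle : ∀ s < d+1, Qp d P i s ≤ 0 := by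
    intro s hs
    rw [hidef, Qp_eq_T]
    rcases lt_or_ge (s0 + s) (d+1) with hlt | hge
    · have := hs0max (s0 + s) hlt
      omega
    · have hk : (s0 + s - (d+1)) + (d+1) = s0 + s := by omega
      have h1 : Tp d P (s0 + s) = Tp d P (s0 + s - (d+1)) + 1 := by
        have := Tp_add hodd P hsP (s0 + s - (d+1))
        rwa [hk] at this
      have h2 : s0 + s - (d+1) < s0 := by omega
      have := hs0min _ h2
      omega
  -- basic index manipulation facts
  have hplus : ∀ t : ℕ, (i + ((2*t : ℕ) : Fin (d+1))) + 1 = i + ((2*t+1 : ℕ) : Fin (d+1)) := by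
    intro t; push_cast; ring
  have hminus : ∀ t : ℕ, (i + ((2*t : ℕ) : Fin (d+1))) - 1 = i + ((2*t+d : ℕ) : Fin (d+1)) := by
    intro t
    have h0 : ((d:ℕ) : Fin (d+1)) + 1 = 0 := by
      have h1 : ((d:ℕ) : Fin (d+1)) + 1 = ((d+1 : ℕ) : Fin (d+1)) := by push_cast; ring
      rw [h1, Fin.natCast_self]
    rw [sub_eq_iff_eq_add]
    have h2 : i + ((2*t+d : ℕ) : Fin (d+1)) + 1 = i + ((2*t : ℕ) : Fin (d+1)) + (((d:ℕ) : Fin (d+1)) + 1) := by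
      push_cast; ring
    rw [h2, h0, add_zero]
  have hcond1 : ∀ τ t : ℕ, τ < d+1 → t < d+1 →
      ((i + ((2*τ+1:ℕ):Fin (d+1)) = (i + ((2*t:ℕ):Fin (d+1))) + 1) ↔ t = τ) := by
    intro τ t hτ ht
    rw [hplus t, add_right_inj, odd_cast_iff hodd]
    exact ⟨fun h => (modeq_eq_of_lt h hτ ht).symm, fun h => by rw [h]⟩
  have hcond2 : ∀ τ t : ℕ, τ < d+1 → t < d+1 →
      ((i + ((2*τ+1:ℕ):Fin (d+1)) = (i + ((2*t:ℕ):Fin (d+1))) - 1)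
        ↔ t = (if τ = d then 0 else τ+1)) := by
    intro τ t hτ ht
    rw [hminus t, add_right_inj, odd_even_cast_iff hodd]
    by_cases hτd : τ = d
    · rw [if_pos hτd]
      have h0 : (τ+1) ≡ 0 [MOD d+1] := by
        rw [hτd]; show (d+1) % (d+1) = 0 % (d+1); simp
      constructor
      · intro h
        exact (modeq_eq_of_lt (h0.symm.trans h) (Nat.succ_pos d) ht).symm
      · intro h; rw [h]; exact h0
    · rw [if_neg hτd]
      have hτ1 : τ + 1 < d+1 := by omega
      exact ⟨fun h => (modeq_eq_of_lt h hτ1 ht).symm, fun h => by rw [h]⟩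
  -- the linear functional L
  set L : (Fin (d+1) → ℝ) → ℝ :=
    fun x => ∑ r ∈ Finset.range d, ((d - r : ℕ) : ℝ) * x (i + ((2*r+1 : ℕ) : Fin (d+1))) with hLdef
  have hLlin : IsLinearMap ℝ L := lin_comb _ _ _
  have hLq : 0 ≤ L q := by
    refine hull_ge hLlin ?_ hq
    rintro x ⟨j, rfl⟩
    apply Finset.sum_nonneg
    intro r _
    have h1 : (0:ℝ) ≤ eb d j (i + ((2*r+1:ℕ):Fin (d+1))) := by
      unfold eb; split <;> norm_num
    exact mul_nonneg (Nat.cast_nonneg _) h1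
  have hLr : -1 ≤ L r0 := by
    refine hull_ge hLlin ?_ hr0
    rintro x ⟨j, rfl⟩
    obtain ⟨t, ht, rfl⟩ := exists_rep hde i j
    have key : ∀ r ∈ Finset.range d,
        ((d - r : ℕ) : ℝ) * (av d (i + ((2*t:ℕ):Fin (d+1))) (i + ((2*r+1:ℕ):Fin (d+1))))
        = ((d - r:ℕ):ℝ) * (if r = t then 1 else 0)
          - ((d - r:ℕ):ℝ) * (if r+1 = t then 1 else 0) := by
      intro r hr
      have hrd : r < d := Finset.mem_range.mp hr
      have hrlt : r < d+1 := by omega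
      have hav : av d (i + ((2*t:ℕ):Fin (d+1))) (i + ((2*r+1:ℕ):Fin (d+1)))
          = (if r = t then (1:ℝ) else 0) - (if r+1 = t then (1:ℝ) else 0) := by
        show (if (i + ((2*r+1:ℕ):Fin (d+1))) = (i + ((2*t:ℕ):Fin (d+1))) + 1 then (1:ℝ) else 0)
          - (if (i + ((2*r+1:ℕ):Fin (d+1))) = (i + ((2*t:ℕ):Fin (d+1))) - 1 then (1:ℝ) else 0) = _
        have hc1 : ((i + ((2*r+1:ℕ):Fin (d+1))) = (i + ((2*t:ℕ):Fin (d+1))) + 1) ↔ (r = t) :=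
          (hcond1 r t hrlt ht).trans eq_comm
        have hc2 : ((i + ((2*r+1:ℕ):Fin (d+1))) = (i + ((2*t:ℕ):Fin (d+1))) - 1) ↔ (r+1 = t) := by
          rw [hcond2 r t hrlt ht, if_neg (by omega : ¬ r = d)]
          exact eq_comm
        rw [if_congr hc1 rfl rfl, if_congr hc2 rfl rfl]
      rw [hav]; ring
    have hLav : L (av d (i + ((2*t:ℕ):Fin (d+1))))
        = (if t ∈ Finset.range d then ((d - t:ℕ):ℝ) else 0)
          - ∑ r ∈ Finset.range d, ((d - r:ℕ):ℝ) * (if r+1 = t then 1 else 0) := by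
      simp only [hLdef]
      rw [Finset.sum_congr rfl key, Finset.sum_sub_distrib,
        sum_mul_ind (fun r => ((d - r:ℕ):ℝ)) (Finset.range d) t]
    rcases Nat.eq_zero_or_pos t with ht0 | ht0
    · subst ht0
      rw [hLav]
      have hz : ∑ r ∈ Finset.range d, ((d - r:ℕ):ℝ) * (if r+1 = 0 then 1 else 0) = 0 := by
        apply Finset.sum_eq_zero
        intro r _
        rw [if_neg (Nat.succ_ne_zero r)]
        ring
      rw [hz]
      have h0d : (0:ℕ) ∈ Finset.range d := Finset.mem_range.mpr (by omega)
      rw [if_pos h0d]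
      have : (0:ℝ) ≤ ((d - 0 : ℕ):ℝ) := Nat.cast_nonneg _
      linarith
    · have ht' : t ≤ d := by omega
      have hz : ∀ r ∈ Finset.range d, ((d - r:ℕ):ℝ) * (if r+1 = t then 1 else 0)
          = ((d - r:ℕ):ℝ) * (if r = t-1 then 1 else 0) := by
        intro r _
        have : (r+1 = t) ↔ (r = t-1) := by omega
        rw [if_congr this rfl rfl]
      rw [hLav, Finset.sum_congr rfl hz, sum_mul_ind (fun r => ((d - r:ℕ):ℝ)) (Finset.range d) (t-1)]
      have ht1 : t - 1 ∈ Finset.range d := Finset.mem_range.mpr (by omega)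
      rw [if_pos ht1]
      by_cases htd : t = d
      · subst htd
        rw [if_neg (by simp : ¬ t ∈ Finset.range t)]
        have h1 : (t - (t-1) : ℕ) = 1 := by omega
        rw [h1]
        norm_num
      · have htr : t ∈ Finset.range d := Finset.mem_range.mpr (by omega)
        rw [if_pos htr]
        have h1 : (d - (t-1) : ℕ) = (d - t) + 1 := by omega
        rw [h1]
        push_cast
        ring_nf
        norm_num
  -- the key sum inequality
  have hLp : L p = L q + m * L r0 := by
    simp only [hLdef]
    have h1 : ∀ r ∈ Finset.range d, ((d - r:ℕ):ℝ) * p (i + ((2*r+1:ℕ):Fin (d+1)))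
        = ((d - r:ℕ):ℝ) * q (i + ((2*r+1:ℕ):Fin (d+1)))
          + m * (((d - r:ℕ):ℝ) * r0 (i + ((2*r+1:ℕ):Fin (d+1)))) := by
      intro r _
      rw [hpk]
      ring
    rw [Finset.sum_congr rfl h1, Finset.sum_add_distrib, ← Finset.mul_sum]
  have hQsumR : -m ≤ ((∑ s ∈ Finset.range (d+1), Qp d P i s : ℤ) : ℝ) := by
    have h1 : ∑ s ∈ Finset.range (d+1), Qp d P i s
        = ∑ r ∈ Finset.range d, ((d - r : ℕ) : ℤ) * P (i + ((2*r+1:ℕ):Fin (d+1))) :=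
      tri_sum (fun r => P (i + ((2*r+1:ℕ):Fin (d+1)))) d
    have h2 : ((∑ s ∈ Finset.range (d+1), Qp d P i s : ℤ) : ℝ) = L p := by
      rw [h1]
      simp only [hLdef]
      rw [Int.cast_sum]
      refine Finset.sum_congr rfl fun r _ => ?_
      rw [Int.cast_mul, hP]
      push_cast
      ring
    rw [h2, hLp]
    have h3 : m * (-1) ≤ m * L r0 := mul_le_mul_of_nonneg_left hLr hm
    linarith
  -- construct the convex combination
  set u : ℕ → ℝ := fun t => -((Qp d P i t : ℤ) : ℝ) / m with hudef
  have hu0 : u 0 = 0 := by simp [hudef, Qp_zero]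
  have hun : ∀ t, t < d+1 → 0 ≤ u t := by
    intro t ht
    apply div_nonneg _ hm
    have := hQle t ht
    have h1 : ((Qp d P i t : ℤ) : ℝ) ≤ 0 := by exact_mod_cast this
    linarith
  have husum : ∑ t ∈ Finset.range (d+1), u t ≤ 1 := by
    rcases eq_or_lt_of_le hm with hm0 | hm0
    · have hz : ∀ t ∈ Finset.range (d+1), u t = (0:ℝ) := by
        intro t _
        simp [hudef, ← hm0]
      rw [Finset.sum_congr rfl hz]
      simp
    · have hsum' : ∑ t ∈ Finset.range (d+1), u t
          = (-((∑ s ∈ Finset.range (d+1), Qp d P i s : ℤ) : ℝ)) / m := by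
        simp only [hudef]
        rw [← Finset.sum_div]
        congr 1
        push_cast
        rw [← Finset.sum_neg_distrib]
      rw [hsum', div_le_one hm0]
      linarith
  have hQzero : m = 0 → ∀ s, s < d+1 → Qp d P i s = 0 := by
    intro hm0 s hs
    have hnp : ∀ s' ∈ Finset.range (d+1), Qp d P i s' ≤ 0 :=
      fun s' hs' => hQle s' (Finset.mem_range.mp hs')
    have hge : (0:ℤ) ≤ ∑ s' ∈ Finset.range (d+1), Qp d P i s' := by
      have := hQsumR
      rw [hm0] at this
      exact_mod_cast (by linarith : (0:ℝ) ≤ ((∑ s' ∈ Finset.range (d+1), Qp d P i s' : ℤ) : ℝ))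
    have hle : ∑ s' ∈ Finset.range (d+1), Qp d P i s' ≤ 0 := Finset.sum_nonpos hnp
    have hzz := (Finset.sum_eq_zero_iff_of_nonpos hnp).mp (le_antisymm hle hge)
    exact hzz s (Finset.mem_range.mpr hs)
  have hmu : ∀ t, t < d+1 → m * u t = -((Qp d P i t : ℤ) : ℝ) := by
    intro t ht
    rcases eq_or_lt_of_le hm with hm0 | hm0
    · have h1 := hQzero hm0.symm t ht
      rw [h1, ← hm0]
      simp
    · rw [hudef]
      field_simp
  set rstar : Fin (d+1) → ℝ :=
    ∑ t ∈ Finset.range (d+1), u t • av d (i + ((2*t:ℕ) : Fin (d+1))) with hrstar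
  -- membership of rstar
  have hrmem : rstar ∈ convexHull ℝ ({0} ∪ av d '' {j | j ≠ i}) := by
    set w : ℕ → ℝ := fun t => if t = 0 then 1 - ∑ t' ∈ Finset.range (d+1), u t' else u t with hwdef
    set zz : ℕ → (Fin (d+1) → ℝ) :=
      fun t => if t = 0 then 0 else av d (i + ((2*t:ℕ):Fin (d+1))) with hzdef
    have h1 : ∀ t ∈ Finset.range (d+1), 0 ≤ w t := by
      intro t htm
      have ht := Finset.mem_range.mp htm
      simp only [hwdef]
      by_cases ht0 : t = 0
      · rw [if_pos ht0]; linarith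
      · rw [if_neg ht0]; exact hun t ht
    have h2 : ∑ t ∈ Finset.range (d+1), w t = 1 := by
      have hw : ∑ t ∈ Finset.range (d+1), w t = ∑ t ∈ Finset.range d, w (t+1) + w 0 :=
        Finset.sum_range_succ' w d
      have hu' : ∑ t ∈ Finset.range (d+1), u t = ∑ t ∈ Finset.range d, u (t+1) + u 0 :=
        Finset.sum_range_succ' u d
      have hww : ∀ t ∈ Finset.range d, w (t+1) = u (t+1) := by
        intro t _
        simp only [hwdef]
        exact if_neg (Nat.succ_ne_zero t)
      have hw0 : w 0 = 1 - ∑ t' ∈ Finset.range (d+1), u t' := by simp only [hwdef, if_pos]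
      rw [hw, Finset.sum_congr rfl hww, hw0]
      rw [hu', hu0] at *
      linarith
    have h3 : ∀ t ∈ Finset.range (d+1), zz t ∈ convexHull ℝ ({0} ∪ av d '' {j | j ≠ i}) := by
      intro t htm
      have ht := Finset.mem_range.mp htm
      apply subset_convexHull
      simp only [hzdef]
      by_cases ht0 : t = 0
      · rw [if_pos ht0]
        exact Set.mem_union_left _ rfl
      · rw [if_neg ht0]
        apply Set.mem_union_right
        refine ⟨i + ((2*t:ℕ):Fin (d+1)), ?_, rfl⟩
        show i + ((2*t:ℕ):Fin (d+1)) ≠ i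
        intro hcontra
        have h4 : ((2*t:ℕ):Fin (d+1)) = 0 := by
          have := hcontra
          rwa [add_eq_left] at this
        have h5 : ((2*t : ℕ) : Fin (d+1)) = ((2*0 : ℕ) : Fin (d+1)) := by
          rw [h4]; norm_num
        have h6 := (even_cast_iff hodd t 0).mp h5
        have := modeq_eq_of_lt h6 ht (Nat.succ_pos d)
        omega
    have h4 : ∑ t ∈ Finset.range (d+1), w t • zz t = rstar := by
      rw [hrstar]
      refine Finset.sum_congr rfl fun t _ => ?_
      by_cases ht0 : t = 0
      · subst ht0
        simp only [hwdef, hzdef, if_pos rfl]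
        rw [hu0]
        simp
      · simp only [hwdef, hzdef, if_neg ht0]
    have h5 := Convex.sum_mem (convex_convexHull ℝ _) h1 h2 h3
    rwa [h4] at h5
  -- the final identity
  have key : ∀ k, p k = eb d (i-1) k + m * rstar k := by
    intro k
    obtain ⟨τ, hτ, hk⟩ : ∃ τ, τ < d+1 ∧ k = i + ((2*τ+1 : ℕ) : Fin (d+1)) := by
      obtain ⟨τ, hτ, hk⟩ := exists_rep hde (i+1) k
      refine ⟨τ, hτ, ?_⟩
      rw [hk]; push_cast; ring
    obtain ⟨t2, ht2eq⟩ : ∃ t2, (if τ = d then 0 else τ+1) = t2 := ⟨_, rfl⟩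
    have ht2lt : t2 < d+1 := by rw [← ht2eq]; split <;> omega
    have hcond2' : ∀ t : ℕ, t < d+1 → ((k = (i + ((2*t:ℕ):Fin (d+1))) - 1) ↔ t = t2) := by
      intro t ht
      rw [hk, ← ht2eq]
      exact hcond2 τ t hτ ht
    have hcond1' : ∀ t : ℕ, t < d+1 → ((k = (i + ((2*t:ℕ):Fin (d+1))) + 1) ↔ t = τ) := by
      intro t ht
      rw [hk]
      exact hcond1 τ t hτ ht
    -- eb value
    have hki : (k = i - 1) ↔ (0 = t2) := by
      have h5 := hcond2' 0 (Nat.succ_pos d)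
      have h6 : i + ((2*0 : ℕ) : Fin (d+1)) = i := by norm_num
      rwa [h6] at h5
    have hebval : eb d (i-1) k = if τ = d then 1 else 0 := by
      show (if k = i - 1 then (1:ℝ) else 0) = _
      by_cases hτd : τ = d
      · rw [if_pos hτd, if_pos (hki.mpr (by rw [← ht2eq, if_pos hτd]))]
      · rw [if_neg hτd, if_neg]
        intro hcontra
        have h7 := hki.mp hcontra
        rw [← ht2eq, if_neg hτd] at h7
        omega
    -- rstar value
    have hrk : m * rstar k = -((Qp d P i τ : ℤ):ℝ) + ((Qp d P i t2 : ℤ):ℝ) := by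
      have h6 : rstar k = ∑ t ∈ Finset.range (d+1),
          u t * (av d (i + ((2*t:ℕ):Fin (d+1))) k) := by
        rw [hrstar]
        simp [Finset.sum_apply]
      rw [h6, Finset.mul_sum]
      have h7 : ∀ t ∈ Finset.range (d+1),
          m * (u t * (av d (i + ((2*t:ℕ):Fin (d+1))) k))
          = (-((Qp d P i t : ℤ) : ℝ)) * (if t = τ then 1 else 0)
            - (-((Qp d P i t : ℤ) : ℝ)) * (if t = t2 then 1 else 0) := by
        intro t htmem
        have ht := Finset.mem_range.mp htmem
        rw [← mul_assoc, hmu t ht]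
        have hav : av d (i + ((2*t:ℕ):Fin (d+1))) k
            = (if t = τ then (1:ℝ) else 0) - (if t = t2 then (1:ℝ) else 0) := by
          show (if k = (i + ((2*t:ℕ):Fin (d+1))) + 1 then (1:ℝ) else 0)
            - (if k = (i + ((2*t:ℕ):Fin (d+1))) - 1 then (1:ℝ) else 0) = _
          rw [if_congr (hcond1' t ht) rfl rfl, if_congr (hcond2' t ht) rfl rfl]
        rw [hav]
        ring
      rw [Finset.sum_congr rfl h7, Finset.sum_sub_distrib,
        sum_mul_ind (fun t => -((Qp d P i t : ℤ) : ℝ)) (Finset.range (d+1)) τ,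
        sum_mul_ind (fun t => -((Qp d P i t : ℤ) : ℝ)) (Finset.range (d+1)) t2]
      rw [if_pos (Finset.mem_range.mpr hτ), if_pos (Finset.mem_range.mpr ht2lt)]
      ring
    rw [hP k, hebval, hrk]
    by_cases hτd : τ = d
    · have ht2 : t2 = 0 := by rw [← ht2eq, if_pos hτd]
      have htop : Qp d P i τ + P k = 1 := by
        have h8 : Qp d P i (d+1) = 1 := by rw [Qp_top hodd, hsP]
        rw [Qp_succ] at h8
        rw [hk, hτd]
        exact h8
      rw [ht2, Qp_zero, if_pos hτd]
      have h9 : ((Qp d P i τ : ℤ):ℝ) + ((P k : ℤ) : ℝ) = 1 := by exact_mod_cast htop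
      push_cast
      linarith
    · have ht2 : t2 = τ + 1 := by rw [← ht2eq, if_neg hτd]
      rw [ht2, if_neg hτd]
      have h9 : Qp d P i (τ+1) = Qp d P i τ + P k := by
        rw [Qp_succ, hk]
      have h10 : ((Qp d P i (τ+1) : ℤ):ℝ) = ((Qp d P i τ : ℤ):ℝ) + ((P k : ℤ):ℝ) := by
        exact_mod_cast h9
      linarith
  have hfinal : p = eb d (i - 1) + m • rstar := by
    funext k
    rw [key k]
    simp
  refine ⟨i, ?_⟩
  rw [hfinal]
  exact Set.add_mem_add rfl (Set.smul_mem_smul_set hrmem)
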